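/- Let n ≥ 3. Consider ℂ-linear maps x_i : ℂ^i → ℂ^{i+1} and y_i : ℂ^{i+1} → ℂ^i for 1 ≤ i ≤ n−2, linear functionals α_i : ℂ^{n−1} → ℂ for 1 ≤ i ≤ n, and linear maps β_i : ℂ → ℂ^{n−1} for 1 ≤ i ≤ n. Set φ : ℂ^{n−1} → ℂⁿ, φ(v) := (α_1(v),…,α_n(v)), and ψ : ℂⁿ → ℂ^{n−1}, ψ(v_1,…,v_n) := β_1(v_1)+⋯+β_n(v_n). Assume the central moment-map relations hold for some ν_1,…,ν_{n−1} ∈ ℂ: y_1∘x_1 = ν_1·id_ℂ; y_i∘x_i = x_{i−1}∘y_{i−1} + ν_i·id_{ℂ^i} for 2 ≤ i ≤ n−2; and ψ∘φ = x_{n−2}∘y_{n−2} + ν_{n−1}·id_{ℂ^{n−1}}. Then the following are equivalent. (1) Whenever V_1 ⊆ ℂ^1, …, V_{n−1} ⊆ ℂ^{n−1} and L_1, …, L_{n−1} ⊆ ℂ are linear subspaces satisfying x_i(V_i) ⊆ V_{i+1} and y_i(V_{i+1}) ⊆ V_i for 1 ≤ i ≤ n−2, α_j(V_{n−1}) ⊆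 L_j and β_j(L_j) ⊆ V_{n−1} for 1 ≤ j ≤ n−1, and V_{n−1} ⊆ ker α_n, then all V_i and all L_j are zero. (2) Each x_i is injective, φ is injective, and for every nonempty S ⊆ {1,…,n−1}, the map φ∘ψ : ℂⁿ → ℂⁿ does not map the coordinate subspace ℂ^S into itself. -/

import Mathlib

/-- The coordinate subspace `ℂ^S ⊆ ℂⁿ`: the span of the standard basis vectors `e_i`, `i ∈ S`. -/
noncomputable def coordSubspace (n : ℕ) (S : Finset (Fin n)) : Submodule ℂ (Fin n → ℂ) :=
  Submodule.span ℂ ((fun i => Pi.single i (1 : ℂ)) '' ↑S)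

/-- (Here `n = m + 3 ≥ 3`; spaces are `ℂ^i = Fin i → ℂ`, stem maps
`x_i : ℂ^i → ℂ^{i+1}`, `y_i : ℂ^{i+1} → ℂ^i` for `1 ≤ i ≤ n−2 = m+1`; functionals
`α_1,…,α_n` on `ℂ^{n−1}` and maps `β_1,…,β_n : ℂ → ℂ^{n−1}` are 0-indexed by `Fin (m+3)`,
with `α_n = α (Fin.last _)`; `φ = LinearMap.pi α`, `ψ = ∑ β_j ∘ proj_j`.)
Under the central moment-map relations, the following are equivalent:
(1) any graded subspace `(V_i, L_j)` invariant under all the maps and contained in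
`ker α_n` at the top stem vertex is zero;
(2) all `x_i` and `φ` are injective, and `φ∘ψ` maps no nonzero coordinate subspace
`ℂ^S ⊆ ℂ^{n−1} ⊆ ℂⁿ` into itself. -/

lemma single_eq_smul {n : ℕ} (i : Fin n) (c : ℂ) :
    Pi.single i c = c • (Pi.single i (1 : ℂ) : Fin n → ℂ) := by
  funext j
  by_cases h : j = i
  · subst h; simp
  · simp [Pi.single_eq_of_ne h]

lemma mem_coordSubspace_iff {n : ℕ} {S : Finset (Fin n)} {v : Fin n → ℂ} :
    v ∈ coordSubspace n S ↔ ∀ i ∉ S, v i = 0 := by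
  constructor
  · intro hv
    have hle : coordSubspace n S ≤
        Submodule.pi Set.univ (fun i => if i ∈ S then (⊤ : Submodule ℂ ℂ) else ⊥) := by
      rw [coordSubspace, Submodule.span_le]
      rintro _ ⟨i, hi, rfl⟩
      intro j _
      by_cases hj : j ∈ S
      · simp [hj]
      · have hne : j ≠ i := fun h => hj (h ▸ hi)
        simp [hj, Pi.single_eq_of_ne hne]
    intro i hi
    have := hle hv i (Set.mem_univ i)
    simpa [hi] using this
  · intro hv
    have hsum : v = ∑ i ∈ S, Pi.single i (v i) := by
      funext j
      rw [Finset.sum_apply]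
      by_cases hj : j ∈ S
      · rw [Finset.sum_eq_single j]
        · simp
        · intro b _ hb
          exact Pi.single_eq_of_ne (Ne.symm hb) _
        · intro h; exact absurd hj h
      · rw [hv j hj]
        symm
        apply Finset.sum_eq_zero
        intro i hi
        have hne : j ≠ i := fun h => hj (h ▸ hi)
        exact Pi.single_eq_of_ne hne _
    rw [hsum]
    apply Submodule.sum_mem
    intro i hi
    rw [single_eq_smul]
    exact Submodule.smul_mem _ _ (Submodule.subset_span ⟨i, hi, rfl⟩)

lemma submodule_complex_ne_bot {L : Submodule ℂ ℂ} (h : L ≠ ⊥) : L = ⊤ := by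
  obtain ⟨c, hcL, hc0⟩ := Submodule.exists_mem_ne_zero_of_ne_bot h
  rw [Submodule.eq_top_iff']
  intro a
  have := L.smul_mem (a * c⁻¹) hcL
  have heq : (a * c⁻¹) • c = a := by
    rw [smul_eq_mul, mul_assoc, inv_mul_cancel₀ hc0, mul_one]
  rwa [heq] at this

noncomputable def Vfam (y : ∀ i : ℕ, (Fin (i+1) → ℂ) →ₗ[ℂ] (Fin i → ℂ)) (t : ℕ)
    (W : Submodule ℂ (Fin (t+1) → ℂ)) : ∀ j : ℕ, Submodule ℂ (Fin j → ℂ) :=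
  fun j =>
    if _ : j < t + 1 then Submodule.map (y j) (Vfam y t W (j+1))
    else if h2 : j = t + 1 then cast (by rw [h2]) W
    else ⊥
termination_by j => t + 1 - j

lemma Vfam_lt (y : ∀ i : ℕ, (Fin (i+1) → ℂ) →ₗ[ℂ] (Fin i → ℂ)) (t : ℕ)
    (W : Submodule ℂ (Fin (t+1) → ℂ)) {j : ℕ} (h : j < t + 1) :
    Vfam y t W j = Submodule.map (y j) (Vfam y t W (j+1)) := by
  rw [Vfam]
  simp [h]

lemma Vfam_self (y : ∀ i : ℕ, (Fin (i+1) → ℂ) →ₗ[ℂ] (Fin i → ℂ)) (t : ℕ)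
    (W : Submodule ℂ (Fin (t+1) → ℂ)) :
    Vfam y t W (t+1) = W := by
  rw [Vfam]
  simp

lemma Vfam_gt (y : ∀ i : ℕ, (Fin (i+1) → ℂ) →ₗ[ℂ] (Fin i → ℂ)) (t : ℕ)
    (W : Submodule ℂ (Fin (t+1) → ℂ)) {j : ℕ} (h : t + 1 < j) :
    Vfam y t W j = ⊥ := by
  rw [Vfam]
  simp [Nat.lt_asymm h, Nat.ne_of_gt h]

lemma Vfam_yinv (y : ∀ i : ℕ, (Fin (i+1) → ℂ) →ₗ[ℂ] (Fin i → ℂ)) (t : ℕ)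
    (W : Submodule ℂ (Fin (t+1) → ℂ)) (j : ℕ) :
    Submodule.map (y j) (Vfam y t W (j+1)) ≤ Vfam y t W j := by
  by_cases h : j < t + 1
  · rw [Vfam_lt y t W h]
  · rw [Vfam_gt y t W (by omega)]
    simp

lemma Vfam_xinv (x : ∀ i : ℕ, (Fin i → ℂ) →ₗ[ℂ] (Fin (i+1) → ℂ))
    (y : ∀ i : ℕ, (Fin (i+1) → ℂ) →ₗ[ℂ] (Fin i → ℂ)) (ν : ℕ → ℂ) (t : ℕ)
    (W : Submodule ℂ (Fin (t+1) → ℂ))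
    (hmid : ∀ i, 1 ≤ i → i < t → ∀ u : Fin (i+1) → ℂ,
      x i (y i u) = y (i+1) (x (i+1) u) - ν (i+1) • u)
    (htop : 1 ≤ t → ∀ u ∈ W, x t (y t u) ∈ W) :
    ∀ i, 1 ≤ i → i ≤ t → Submodule.map (x i) (Vfam y t W i) ≤ Vfam y t W (i+1) := by
  suffices H : ∀ d i, t = i + d → 1 ≤ i →
      Submodule.map (x i) (Vfam y t W i) ≤ Vfam y t W (i+1) by
    intro i h1 h2
    exact H (t - i) i (by omega) h1
  intro d
  induction d with
  | zero =>
    intro i ht h1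
    obtain rfl : t = i := by omega
    rw [Vfam_lt y t W (by omega), Vfam_self]
    rintro z hz
    rw [Submodule.mem_map] at hz
    obtain ⟨w, hw, rfl⟩ := hz
    rw [Submodule.mem_map] at hw
    obtain ⟨u, hu, rfl⟩ := hw
    exact htop h1 u hu
  | succ d ih =>
    intro i ht h1
    have hit : i < t := by omega
    rw [Vfam_lt y t W (by omega)]
    rintro z hz
    rw [Submodule.mem_map] at hz
    obtain ⟨w, hw, rfl⟩ := hz
    rw [Submodule.mem_map] at hw
    obtain ⟨u, hu, rfl⟩ := hw
    rw [hmid i h1 hit u]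
    apply Submodule.sub_mem
    · apply Vfam_yinv y t W (i+1)
      exact ⟨x (i+1) u, ih (i+1) (by omega) (by omega) ⟨u, hu, rfl⟩, rfl⟩
    · exact Submodule.smul_mem _ _ hu

theorem stmt3 (m : ℕ)
    (x : ∀ i : ℕ, (Fin i → ℂ) →ₗ[ℂ] (Fin (i+1) → ℂ))
    (y : ∀ i : ℕ, (Fin (i+1) → ℂ) →ₗ[ℂ] (Fin i → ℂ))
    (α : Fin (m+3) → ((Fin (m+2) → ℂ) →ₗ[ℂ] ℂ))
    (β : Fin (m+3) → (ℂ →ₗ[ℂ] (Fin (m+2) → ℂ)))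
    (ν : ℕ → ℂ)
    (hrel1 : (y 1).comp (x 1) = ν 1 • LinearMap.id)
    (hrel2 : ∀ i, 1 ≤ i → i ≤ m →
      (y (i+1)).comp (x (i+1)) = (x i).comp (y i) + ν (i+1) • LinearMap.id)
    (hrel3 : (∑ j : Fin (m+3), (β j).comp (LinearMap.proj j)).comp (LinearMap.pi α) =
      (x (m+1)).comp (y (m+1)) + ν (m+2) • LinearMap.id) :
    ((∀ (V : ∀ i : ℕ, Submodule ℂ (Fin i → ℂ)) (L : Fin (m+2) → Submodule ℂ ℂ),
        (∀ i, 1 ≤ i → i ≤ m+1 → (V i).map (x i) ≤ V (i+1)) →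
        (∀ i, 1 ≤ i → i ≤ m+1 → (V (i+1)).map (y i) ≤ V i) →
        (∀ j : Fin (m+2), (V (m+2)).map (α j.castSucc) ≤ L j) →
        (∀ j : Fin (m+2), (L j).map (β j.castSucc) ≤ V (m+2)) →
        V (m+2) ≤ LinearMap.ker (α (Fin.last (m+2))) →
        ((∀ i, 1 ≤ i → i ≤ m+2 → V i = ⊥) ∧ ∀ j : Fin (m+2), L j = ⊥)) ↔
      ((∀ i, 1 ≤ i → i ≤ m+1 → Function.Injective (x i)) ∧
        Function.Injective (LinearMap.pi α) ∧
        ∀ S : Finset (Fin (m+2)), S.Nonempty →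
          ¬ ((coordSubspace (m+3) (S.image Fin.castSucc)).map
                ((LinearMap.pi α).comp (∑ j : Fin (m+3), (β j).comp (LinearMap.proj j))) ≤
              coordSubspace (m+3) (S.image Fin.castSucc)))) := by
  classical
  set Ψ := ∑ j : Fin (m+3), (β j).comp (LinearMap.proj j) with hΨdef
  have hΨsingle : ∀ (i : Fin (m+3)) (c : ℂ), Ψ (Pi.single i c) = β i c := by
    intro i c
    rw [hΨdef, LinearMap.sum_apply]
    rw [Finset.sum_eq_single i]
    · simp
    · intro b _ hb
      simp [Pi.single_eq_of_ne hb]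
    · simp
  have hmid : ∀ i, 1 ≤ i → i ≤ m → ∀ u : Fin (i+1) → ℂ,
      x i (y i u) = y (i+1) (x (i+1) u) - ν (i+1) • u := by
    intro i h1 h2 u
    have h := LinearMap.congr_fun (hrel2 i h1 h2) u
    simp only [LinearMap.comp_apply, LinearMap.add_apply, LinearMap.smul_apply,
      LinearMap.id_apply] at h
    rw [eq_sub_iff_add_eq]
    exact h.symm
  have htopeq : ∀ u : Fin (m+2) → ℂ,
      x (m+1) (y (m+1) u) = Ψ (LinearMap.pi α u) - ν (m+2) • u := by
    intro u
    have h := LinearMap.congr_fun hrel3 u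
    simp only [LinearMap.comp_apply, LinearMap.add_apply, LinearMap.smul_apply,
      LinearMap.id_apply] at h
    rw [eq_sub_iff_add_eq]
    exact h.symm
  constructor
  · intro h1
    refine ⟨?_, ?_, ?_⟩
    · -- x injectivity
      intro i0 hi1 hi2
      obtain ⟨t, rfl⟩ : ∃ t, i0 = t + 1 := ⟨i0 - 1, by omega⟩
      rw [← LinearMap.ker_eq_bot]
      set W := LinearMap.ker (x (t+1)) with hWdef
      have htop : 1 ≤ t → ∀ u ∈ W, x t (y t u) ∈ W := by
        intro ht u hu
        have hu0 : x (t+1) u = 0 := hu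
        have heq := hmid t ht (by omega) u
        rw [hu0, map_zero, zero_sub] at heq
        rw [heq]
        exact Submodule.neg_mem _ (Submodule.smul_mem _ _ hu)
      have hVx : ∀ i, 1 ≤ i → i ≤ m+1 → (Vfam y t W i).map (x i) ≤ Vfam y t W (i+1) := by
        intro i h1i h2i
        rcases lt_trichotomy i (t+1) with h | h | h
        · exact Vfam_xinv x y ν t W (fun i a b u => hmid i a (by omega) u) htop i h1i (by omega)
        · subst h
          rw [Vfam_self, Vfam_gt y t W (by omega)]
          rintro z ⟨u, hu, rfl⟩
          exact hu
        · rw [Vfam_gt y t W (by omega), Submodule.map_bot]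
          exact bot_le
      have hVtop : Vfam y t W (m+2) = ⊥ := Vfam_gt y t W (by omega)
      have hcon := (h1 (Vfam y t W) (fun _ => ⊥) hVx
        (fun i _ _ => Vfam_yinv y t W i)
        (fun j => by rw [hVtop, Submodule.map_bot])
        (fun j => by rw [Submodule.map_bot]; exact bot_le)
        (by rw [hVtop]; exact bot_le)).1 (t+1) (by omega) (by omega)
      rw [Vfam_self] at hcon
      exact hcon
    · -- φ injectivity
      rw [← LinearMap.ker_eq_bot]
      set W := LinearMap.ker (LinearMap.pi α) with hWdef
      have htop : 1 ≤ m+1 → ∀ u ∈ W, x (m+1) (y (m+1) u) ∈ W := by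
        intro _ u hu
        have hu0 : LinearMap.pi α u = 0 := hu
        have heq := htopeq u
        rw [hu0, map_zero, zero_sub] at heq
        rw [heq]
        exact Submodule.neg_mem _ (Submodule.smul_mem _ _ hu)
      have hVx : ∀ i, 1 ≤ i → i ≤ m+1 →
          (Vfam y (m+1) W i).map (x i) ≤ Vfam y (m+1) W (i+1) :=
        fun i h1i h2i =>
          Vfam_xinv x y ν (m+1) W (fun i a b u => hmid i a (by omega) u) htop i h1i h2i
      have hVtop : Vfam y (m+1) W (m+2) = W := Vfam_self y (m+1) W
      have hcon := (h1 (Vfam y (m+1) W) (fun _ => ⊥) hVx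
        (fun i _ _ => Vfam_yinv y (m+1) W i)
        (fun j => by
          rw [hVtop]
          rintro z ⟨u, hu, rfl⟩
          have hu0 : LinearMap.pi α u = 0 := hu
          have : α j.castSucc u = 0 := by
            have := congrFun hu0 j.castSucc
            simpa using this
          simpa [Submodule.mem_bot] using this)
        (fun j => by rw [Submodule.map_bot]; exact bot_le)
        (by
          rw [hVtop]
          intro u hu
          have hu0 : LinearMap.pi α u = 0 := hu
          have : α (Fin.last (m+2)) u = 0 := by
            have := congrFun hu0 (Fin.last (m+2))
            simpa using this
          exact this)).1 (m+2) (by omega) (by omega)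
      rw [hVtop] at hcon
      exact hcon
    · -- coordinate subspace condition
      intro S hS hmap
      set C := coordSubspace (m+3) (S.image Fin.castSucc) with hCdef
      set W := Submodule.map Ψ C with hWdef
      have hφΨc : ∀ c ∈ C, LinearMap.pi α (Ψ c) ∈ C := fun c hc => hmap ⟨c, hc, rfl⟩
      have htop : 1 ≤ m+1 → ∀ u ∈ W, x (m+1) (y (m+1) u) ∈ W := by
        rintro - u hu
        obtain ⟨c, hc, rfl⟩ := hu
        rw [htopeq]
        apply Submodule.sub_mem
        · exact ⟨LinearMap.pi α (Ψ c), hφΨc c hc, rfl⟩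
        · exact Submodule.smul_mem _ _ ⟨c, hc, rfl⟩
      have hVx : ∀ i, 1 ≤ i → i ≤ m+1 →
          (Vfam y (m+1) W i).map (x i) ≤ Vfam y (m+1) W (i+1) :=
        fun i h1i h2i =>
          Vfam_xinv x y ν (m+1) W (fun i a b u => hmid i a (by omega) u) htop i h1i h2i
      have hVtop : Vfam y (m+1) W (m+2) = W := Vfam_self y (m+1) W
      have hnotmem : ∀ j : Fin (m+2), j ∉ S → j.castSucc ∉ S.image Fin.castSucc := by
        intro j hj hin
        rw [Finset.mem_image] at hin
        obtain ⟨a, ha, hae⟩ := hin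
        exact hj (Fin.castSucc_injective _ hae ▸ ha)
      have hlastnot : Fin.last (m+2) ∉ S.image Fin.castSucc := by
        intro hin
        rw [Finset.mem_image] at hin
        obtain ⟨a, _, hae⟩ := hin
        exact (Fin.castSucc_lt_last a).ne hae
      have hcon := (h1 (Vfam y (m+1) W)
        (fun j => if j ∈ S then ⊤ else ⊥) hVx
        (fun i _ _ => Vfam_yinv y (m+1) W i)
        (fun j => by
          by_cases hj : j ∈ S
          · simp only [if_pos hj]
            exact le_top
          · simp only [if_neg hj]
            rw [hVtop]
            rintro z ⟨u, hu, rfl⟩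
            obtain ⟨c, hc, rfl⟩ := hu
            have h0 := mem_coordSubspace_iff.mp (hφΨc c hc) j.castSucc (hnotmem j hj)
            simpa [Submodule.mem_bot] using h0)
        (fun j => by
          by_cases hj : j ∈ S
          · simp only [if_pos hj]
            rintro z ⟨c, -, rfl⟩
            rw [hVtop]
            refine ⟨Pi.single j.castSucc c, ?_, hΨsingle _ c⟩
            rw [single_eq_smul]
            refine Submodule.smul_mem _ _ (Submodule.subset_span ?_)
            exact ⟨j.castSucc, Finset.mem_coe.mpr (Finset.mem_image_of_mem _ hj), rfl⟩
          · simp only [if_neg hj]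
            rw [Submodule.map_bot]
            exact bot_le)
        (by
          rw [hVtop]
          rintro z ⟨c, hc, rfl⟩
          have h0 := mem_coordSubspace_iff.mp (hφΨc c hc) (Fin.last (m+2)) hlastnot
          exact h0)).2
      obtain ⟨j0, hj0⟩ := hS
      have := hcon j0
      simp only [if_pos hj0] at this
      exact absurd this (by simp)
  · rintro ⟨hxinj, hφinj, hcoord⟩ V L hVx hVy hVα hVβ hVker
    have hLbot : ∀ j, L j = ⊥ := by
      by_contra hne
      push_neg at hne
      obtain ⟨j0, hj0⟩ := hne
      set S : Finset (Fin (m+2)) := Finset.univ.filter (fun j => L j ≠ ⊥) with hSdef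
      have hS : S.Nonempty := ⟨j0, by simp [hSdef, hj0]⟩
      apply hcoord S hS
      have hΨC : Submodule.map Ψ (coordSubspace (m+3) (S.image Fin.castSucc)) ≤ V (m+2) := by
        rw [coordSubspace, Submodule.map_span, Submodule.span_le]
        rintro z ⟨w, ⟨i, hi, rfl⟩, rfl⟩
        rw [Finset.mem_coe, Finset.mem_image] at hi
        obtain ⟨j, hjS, rfl⟩ := hi
        have hLj : L j = ⊤ := submodule_complex_ne_bot (by simpa [hSdef] using hjS)
        show Ψ (Pi.single j.castSucc 1) ∈ V (m+2)
        rw [hΨsingle]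
        exact hVβ j ⟨1, by rw [hLj]; exact Submodule.mem_top, rfl⟩
      have hφV : Submodule.map (LinearMap.pi α) (V (m+2)) ≤
          coordSubspace (m+3) (S.image Fin.castSucc) := by
        rintro z ⟨v, hv, rfl⟩
        rw [mem_coordSubspace_iff]
        intro i hi
        rcases Fin.eq_castSucc_or_eq_last i with ⟨j, rfl⟩ | rfl
        · have hjS : j ∉ S := fun h => hi (Finset.mem_image_of_mem _ h)
          have hLj : L j = ⊥ := by
            by_contra h
            exact hjS (by simp [hSdef, h])
          have hmem := hVα j ⟨v, hv, rfl⟩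
          rw [hLj] at hmem
          simpa [Submodule.mem_bot] using hmem
        · exact hVker hv
      calc Submodule.map ((LinearMap.pi α).comp Ψ)
            (coordSubspace (m+3) (S.image Fin.castSucc))
          = Submodule.map (LinearMap.pi α)
              (Submodule.map Ψ (coordSubspace (m+3) (S.image Fin.castSucc))) :=
            Submodule.map_comp _ _ _
        _ ≤ Submodule.map (LinearMap.pi α) (V (m+2)) := Submodule.map_mono hΨC
        _ ≤ coordSubspace (m+3) (S.image Fin.castSucc) := hφV
    have hVtopbot : V (m+2) = ⊥ := by
      rw [eq_bot_iff]
      intro v hv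
      rw [Submodule.mem_bot]
      apply hφinj
      rw [map_zero]
      funext j
      rcases Fin.eq_castSucc_or_eq_last j with ⟨j', rfl⟩ | rfl
      · have hmem := hVα j' ⟨v, hv, rfl⟩
        rw [hLbot j'] at hmem
        simpa [Submodule.mem_bot] using hmem
      · exact hVker hv
    have hdown : ∀ d i, i + d = m + 2 → 1 ≤ i → V i = ⊥ := by
      intro d
      induction d with
      | zero =>
        intro i hi _
        obtain rfl : i = m + 2 := by omega
        exact hVtopbot
      | succ d ih =>
        intro i hi h1
        have hnext : V (i+1) = ⊥ := ih (i+1) (by omega) (by omega)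
        rw [eq_bot_iff]
        intro v hv
        rw [Submodule.mem_bot]
        have hmem : x i v ∈ V (i+1) := hVx i h1 (by omega) ⟨v, hv, rfl⟩
        rw [hnext, Submodule.mem_bot] at hmem
        exact hxinj i h1 (by omega) (by rw [hmem, map_zero])
    exact ⟨fun i hi1 hi2 => hdown (m+2-i) i (by omega) hi1, hLbot⟩
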